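/- Let Λ = {0, m, m+u} ∪ {n ∈ ℕ : n ≥ m+u+v} be a numerical semigroup of rank 3, where 1 ≤ u ≤ m and v ≥ 2, with conductor c = m+u+v. Then: (i) if u < m, then v ≤ m−u, and for an integer i with 0 ≤ i < c the element c+i is a sum of two left elements of Λ exactly when i ∈ {m−u−v, m−v, m+u−v}; (ii) if u = m, then v ≤ m, and for an integer i with 0 ≤ i < c the element c+i is a sum of two left elements of Λ exactly when i ∈ {m−v, 2m−v}. Consequently, writing o(i) for the unique index with λ_{o(i)} ≤ i < λ_{o(i)+1}, the element c+i−λ_{o(i)} is an order-o(i) seed of Λ precisely for those i with 0 ≤ i < c not lying in the respective exceptional set. -/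
import Mathlib
set_option maxHeartbeats 1000000


/-- A numerical semigroup: a cofinite submonoid of ℕ, viewed as a set of naturals. -/
def IsNumericalSemigroup (S : Set ℕ) : Prop :=
  0 ∈ S ∧ (∀ a ∈ S, ∀ b ∈ S, a + b ∈ S) ∧ ∃ N : ℕ, ∀ n : ℕ, N ≤ n → n ∈ S

/-- The conductor: the smallest `N` such that every `n ≥ N` belongs to `S`. -/
noncomputable def sgConductor (S : Set ℕ) : ℕ :=
  sInf {N : ℕ | ∀ n : ℕ, N ≤ n → n ∈ S}

/-- The genus: the number of gaps. -/
noncomputable def sgGenus (S : Set ℕ) : ℕ :=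
  Sᶜ.ncard

/-- The rank `k(Λ) = c(Λ) - g(Λ)`. -/
noncomputable def sgRank (S : Set ℕ) : ℕ :=
  sgConductor S - sgGenus S

/-- The multiplicity: the smallest nonzero element. -/
noncomputable def sgMultiplicity (S : Set ℕ) : ℕ :=
  sInf {n : ℕ | n ∈ S ∧ n ≠ 0}

/-- The Frobenius number: the largest gap, i.e. the conductor minus one. -/
noncomputable def sgFrobenius (S : Set ℕ) : ℕ :=
  sgConductor S - 1

/-- `sgElem S j` is the element `λ_j` of `S = {λ_0 = 0 < λ_1 < λ_2 < ⋯}`. -/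
noncomputable def sgElem (S : Set ℕ) (j : ℕ) : ℕ :=
  Nat.nth (· ∈ S) j

/-- The jump `u_j = λ_{j+1} - λ_j`. -/
noncomputable def sgJump (S : Set ℕ) (j : ℕ) : ℕ :=
  sgElem S (j + 1) - sgElem S j

/-- The left elements: elements of `S` smaller than the Frobenius number. -/
def sgLeftElements (S : Set ℕ) : Set ℕ :=
  {x : ℕ | x ∈ S ∧ x + 1 < sgConductor S}

/-- A minimal generator: a nonzero element not the sum of two nonzero elements. -/
def IsMinimalGenerator (S : Set ℕ) (x : ℕ) : Prop :=
  x ∈ S ∧ x ≠ 0 ∧ ¬ ∃ a ∈ S, ∃ b ∈ S, a ≠ 0 ∧ b ≠ 0 ∧ a + b = x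

/-- A right generator: a minimal generator larger than the Frobenius number. -/
def IsRightGenerator (S : Set ℕ) (x : ℕ) : Prop :=
  IsMinimalGenerator S x ∧ sgFrobenius S < x

/-- A strong generator: a right generator `μ` such that `μ + m(Λ)` is a minimal
generator of `Λ ∖ {μ}`. -/
noncomputable def IsStrongGenerator (S : Set ℕ) (x : ℕ) : Prop :=
  IsRightGenerator S x ∧ IsMinimalGenerator (S \ {x}) (x + sgMultiplicity S)

/-- A new generator of `Λ`: a minimal generator of `Λ` that is not a minimal
generator of `Λ ∪ {F(Λ)}`. -/
noncomputable def IsNewGenerator (S : Set ℕ) (x : ℕ) : Prop :=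
  IsMinimalGenerator S x ∧ ¬ IsMinimalGenerator (S ∪ {sgFrobenius S}) x

/-- `x` (an element `λ_s ≥ c(Λ)`) is an order-`p` seed of `Λ` if
`x + λ_p ≠ λ_i + λ_j` for all `p < i ≤ j < s`, i.e. for all `i ≤ j` with
`p < i` and `λ_j < x`. -/
noncomputable def IsSeed (S : Set ℕ) (p x : ℕ) : Prop :=
  sgConductor S ≤ x ∧ ∀ i j : ℕ, p < i → i ≤ j → sgElem S j < x →
    x + sgElem S p ≠ sgElem S i + sgElem S j

/-- `T` is a child of `S`: obtained by removing one right generator. -/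
def IsChild (T S : Set ℕ) : Prop :=
  ∃ μ : ℕ, IsRightGenerator S μ ∧ T = S \ {μ}

/-- A grandchild: a child of a child. -/
def IsGrandchild (T S : Set ℕ) : Prop :=
  ∃ C : Set ℕ, IsChild C S ∧ IsChild T C

/-- A great-grandchild: a child of a grandchild. -/
def IsGreatGrandchild (T S : Set ℕ) : Prop :=
  ∃ C : Set ℕ, IsGrandchild C S ∧ IsChild T C

/-- `⟨a,b,c,…⟩|_κ`: the smallest numerical semigroup containing a given set. -/
def sgClosure (A : Set ℕ) : Set ℕ :=
  ⋂₀ {S : Set ℕ | IsNumericalSemigroup S ∧ A ⊆ S}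


theorem statement4 (m u v : ℕ) (hu1 : 1 ≤ u) (hum : u ≤ m) (hv : 2 ≤ v)
    (S : Set ℕ) (hSdef : S = ({0, m, m + u} : Set ℕ) ∪ {n : ℕ | m + u + v ≤ n})
    (hS : IsNumericalSemigroup S) :
    (u < m →
      v ≤ m - u ∧
      (∀ i : ℕ, i < m + u + v →
        ((∃ a ∈ sgLeftElements S, ∃ b ∈ sgLeftElements S, a + b = m + u + v + i) ↔
          (i = m - u - v ∨ i = m - v ∨ i = m + u - v))) ∧
      (∀ i : ℕ, i < m + u + v → ∀ o : ℕ, sgElem S o ≤ i → i < sgElem S (o + 1) →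
        (IsSeed S o (m + u + v + i - sgElem S o) ↔
          ¬ (i = m - u - v ∨ i = m - v ∨ i = m + u - v)))) ∧
    (u = m →
      v ≤ m ∧
      (∀ i : ℕ, i < m + u + v →
        ((∃ a ∈ sgLeftElements S, ∃ b ∈ sgLeftElements S, a + b = m + u + v + i) ↔
          (i = m - v ∨ i = 2 * m - v))) ∧
      (∀ i : ℕ, i < m + u + v → ∀ o : ℕ, sgElem S o ≤ i → i < sgElem S (o + 1) →
        (IsSeed S o (m + u + v + i - sgElem S o) ↔
          ¬ (i = m - v ∨ i = 2 * m - v)))) := by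
    classical
  have hm1 : 1 ≤ m := le_trans hu1 hum
  have memS : ∀ x : ℕ, x ∈ S ↔ (x = 0 ∨ x = m ∨ x = m + u ∨ m + u + v ≤ x) := by
    intro x
    rw [hSdef]
    simp only [Set.mem_union, Set.mem_insert_iff, Set.mem_singleton_iff, Set.mem_setOf_eq]
    tauto
  obtain ⟨h0S, haddS, -⟩ := hS
  have hmS : m ∈ S := (memS m).2 (by tauto)
  have hmuS : m + u ∈ S := (memS (m + u)).2 (by tauto)
  have h2m := (memS (m + m)).1 (haddS m hmS m hmS)
  have h3m := (memS (m + (m + u))).1 (haddS m hmS (m + u) hmuS)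
  have hinf : (setOf (· ∈ S)).Infinite :=
    (Set.Ici_infinite (m + u + v)).mono
      (fun n hn => (memS n).2 (Or.inr (Or.inr (Or.inr hn))))
  have hcond : sgConductor S = m + u + v := by
    have hmem : (m + u + v) ∈ {N : ℕ | ∀ n : ℕ, N ≤ n → n ∈ S} := by
      intro n hn; exact (memS n).2 (by omega)
    have hlb : ∀ N ∈ {N : ℕ | ∀ n : ℕ, N ≤ n → n ∈ S}, m + u + v ≤ N := by
      intro N hN
      by_contra hc
      have := (memS (m + u + v - 1)).1 (hN (m + u + v - 1) (by omega))
      omega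
    exact le_antisymm (Nat.sInf_le hmem) (le_csInf ⟨_, hmem⟩ hlb)
  have hcount : ∀ n, n ≤ m + u + v → Nat.count (· ∈ S) n =
      (if 0 < n then 1 else 0) + (if m < n then 1 else 0) + (if m + u < n then 1 else 0) := by
    intro n hn
    induction n with
    | zero => simp [Nat.count_zero]
    | succ k ih =>
      rw [Nat.count_succ, ih (by omega)]
      by_cases hkS : k ∈ S
      · rw [if_pos hkS]
        have hd := (memS k).1 hkS
        split_ifs <;> omega
      · rw [if_neg hkS]
        have hd : ¬ (k = 0 ∨ k = m ∨ k = m + u ∨ m + u + v ≤ k) :=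
          fun h => hkS ((memS k).2 h)
        split_ifs <;> omega
  have hcountc : ∀ t, Nat.count (· ∈ S) (m + u + v + t) = 3 + t := by
    intro t
    induction t with
    | zero =>
      rw [show m + u + v + 0 = m + u + v by omega, hcount _ le_rfl]
      split_ifs <;> omega
    | succ k ih =>
      rw [show m + u + v + (k + 1) = (m + u + v + k) + 1 by omega, Nat.count_succ, ih,
        if_pos ((memS (m + u + v + k)).2 (by omega))]
      omega
  have he0 : sgElem S 0 = 0 := by
    have h := Nat.nth_count (p := (· ∈ S)) h0S
    rwa [Nat.count_zero] at h
  have he1 : sgElem S 1 = m := by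
    have h := Nat.nth_count (p := (· ∈ S)) hmS
    rw [hcount m (by omega)] at h
    rwa [show (if 0 < m then 1 else 0) + (if m < m then 1 else 0)
      + (if m + u < m then 1 else 0) = 1 by split_ifs <;> omega] at h
  have he2 : sgElem S 2 = m + u := by
    have h := Nat.nth_count (p := (· ∈ S)) hmuS
    rw [hcount (m + u) (by omega)] at h
    rwa [show (if 0 < m + u then 1 else 0) + (if m < m + u then 1 else 0)
      + (if m + u < m + u then 1 else 0) = 2 by split_ifs <;> omega] at h
  have he3 : ∀ t, sgElem S (3 + t) = m + u + v + t := by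
    intro t
    have h := Nat.nth_count (p := (· ∈ S)) ((memS (m + u + v + t)).2 (by omega))
    rwa [hcountc t] at h
  have hleft : ∀ x, x ∈ sgLeftElements S ↔ (x = 0 ∨ x = m ∨ x = m + u) := by
    intro x
    unfold sgLeftElements
    rw [Set.mem_setOf_eq, hcond, memS]
    omega
  have hofacts : ∀ i o : ℕ, i < m + u + v → sgElem S o ≤ i → i < sgElem S (o + 1) →
      (o = 0 ∧ i < m) ∨ (o = 1 ∧ m ≤ i ∧ i < m + u) ∨ (o = 2 ∧ m + u ≤ i) := by
    intro i o h1 h2 h3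
    have ho2 : o ≤ 2 := by
      by_contra hc
      have h4 : sgElem S o = m + u + v + (o - 3) := by
        rw [← he3 (o - 3)]; congr 1; omega
      omega
    interval_cases o
    · have e1 : sgElem S (0 + 1) = m := by norm_num [he1]
      rw [he0] at h2; rw [e1] at h3; omega
    · have e1 : sgElem S (1 + 1) = m + u := by norm_num [he2]
      rw [he1] at h2; rw [e1] at h3; omega
    · rw [he2] at h2; omega
  have hsum : ∀ i : ℕ,
      (∃ a ∈ sgLeftElements S, ∃ b ∈ sgLeftElements S, a + b = m + u + v + i) ↔
      (m + u + v + i = m + m ∨ m + u + v + i = m + (m + u) ∨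
        m + u + v + i = (m + u) + (m + u)) := by
    intro i
    constructor
    · rintro ⟨a, ha, b, hb, hab⟩
      rw [hleft] at ha hb
      omega
    · rintro (h | h | h)
      · exact ⟨m, (hleft m).2 (by tauto), m, (hleft m).2 (by tauto), by omega⟩
      · exact ⟨m, (hleft m).2 (by tauto), m + u, (hleft (m + u)).2 (by tauto), by omega⟩
      · exact ⟨m + u, (hleft (m + u)).2 (by tauto), m + u, (hleft (m + u)).2 (by tauto), by omega⟩
  have hseed : ∀ i : ℕ, i < m + u + v → ∀ o : ℕ, sgElem S o ≤ i → i < sgElem S (o + 1) →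
      (IsSeed S o (m + u + v + i - sgElem S o) ↔
        ¬ ((o = 0 ∧ m + u + v + i = m + m) ∨ (o = 0 ∧ m + u + v + i = m + (m + u)) ∨
           (o ≤ 1 ∧ m + u + v + i = (m + u) + (m + u)))) := by
    intro i hi o ho1 ho2
    have hA := hofacts i o hi ho1 ho2
    unfold IsSeed
    constructor
    · rintro ⟨hcx, hforall⟩ hrep
      rcases hrep with ⟨ho, heq⟩ | ⟨ho, heq⟩ | ⟨ho, heq⟩
      · subst ho
        exact hforall 1 1 (by omega) le_rfl (by rw [he1, he0]; omega)
          (by rw [he0, he1]; omega)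
      · subst ho
        exact hforall 1 2 (by omega) (by omega) (by rw [he2, he0]; omega)
          (by rw [he0, he1, he2]; omega)
      · rcases hA with ⟨rfl, hio⟩ | ⟨rfl, hio⟩ | ⟨rfl, hio⟩
        · exact hforall 2 2 (by omega) le_rfl (by rw [he2, he0]; omega)
            (by rw [he0, he2]; omega)
        · exact hforall 2 2 (by omega) le_rfl (by rw [he2, he1]; omega)
            (by rw [he1, he2]; omega)
        · omega
    · intro hrep
      constructor
      · rw [hcond]; omega
      · intro i' j' hi' hij hjx heq
        apply hrep
        have hj2 : j' ≤ 2 := by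
          by_contra hc
          have hj : sgElem S j' = m + u + v + (j' - 3) := by
            rw [← he3 (j' - 3)]; congr 1; omega
          have hii : sgElem S (o + 1) ≤ sgElem S i' := (Nat.nth_le_nth hinf).2 (by omega)
          omega
        have hi1 : 1 ≤ i' := by omega
        have hi2 : i' ≤ 2 := by omega
        interval_cases i' <;> interval_cases j'
        · rw [he1] at heq
          exact Or.inl ⟨by omega, by omega⟩
        · rw [he1, he2] at heq
          exact Or.inr (Or.inl ⟨by omega, by omega⟩)
        · rw [he2] at heq
          exact Or.inr (Or.inr ⟨by omega, by omega⟩)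
  refine ⟨fun hultm => ?_, fun huem => ?_⟩
  · have hc1 : u + v ≤ m := by omega
    refine ⟨by omega, fun i hi => ?_, fun i hi o ho1 ho2 => ?_⟩
    · rw [hsum i]; omega
    · rw [hseed i hi o ho1 ho2]
      have hA := hofacts i o hi ho1 ho2
      omega
  · have hc2 : v ≤ m := by omega
    refine ⟨hc2, fun i hi => ?_, fun i hi o ho1 ho2 => ?_⟩
    · rw [hsum i]; omega
    · rw [hseed i hi o ho1 ho2]
      have hA := hofacts i o hi ho1 ho2
      omega
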